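/- arXiv:2504.17835 — 2 statements merged into one kernel-verified Lean document; each statement's English description precedes it below -/
import Mathlib

section
/- For every positive integer n and every z in the closed unit disk 𝔻, the n-fold composition of f with itself satisfies f^n(z) = ((√3−n)z + n)/(−nz + n + √3). -/
open Complex Metric Set
open scoped ENNReal

noncomputable section

/-- λ = √3 -/
def lam : ℝ := Real.sqrt 3

/-- The Möbius map f(z) = ((λ−1)z+1)/(−z+λ+1). -/
def apolF : ℂ → ℂ := fun z => (((lam : ℂ) - 1) * z + 1) / (-z + (lam : ℂ) + 1)

/-- Rotation by angle θ. -/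
def Rot (θ : ℝ) : ℂ → ℂ := fun z => Complex.exp ((θ : ℂ) * Complex.I) * z

/-- θ_k = (−1)^k · 2π/3 -/
def thetaA (k : ℕ) : ℝ := (-1 : ℝ) ^ k * (2 * Real.pi / 3)

/-- θ'_k = 2πk/3 -/
def thetaB (k : ℕ) : ℝ := 2 * Real.pi * k / 3

/-- The Apollonian generators φ_{k,n} = R_{θ'_k} ∘ f^n ∘ R_{θ_k} ∘ f. -/
def phi (k n : ℕ) : ℂ → ℂ := Rot (thetaB k) ∘ (apolF^[n]) ∘ Rot (thetaA k) ∘ apolF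

/-- The closed unit disk 𝔻. -/
def unitD : Set ℂ := Metric.closedBall (0 : ℂ) 1

lemma sq3 : ((Real.sqrt 3 : ℂ))^2 = 3 := by
  rw [← Complex.ofReal_pow, Real.sq_sqrt (by norm_num)]
  norm_num

lemma den_ne (n : ℕ) (hn : 1 ≤ n) (z : ℂ) (hz : z ∈ unitD) :
    (-(n : ℂ) * z + (n : ℂ) + (Real.sqrt 3 : ℂ)) ≠ 0 := by
  intro h
  have hz1 : ‖z‖ ≤ 1 := by
    simpa [unitD, Complex.dist_eq] using hz
  have heq : (n : ℂ) * z = (n : ℂ) + (Real.sqrt 3 : ℂ) := by linear_combination -h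
  have habs : ‖(n : ℂ) * z‖ = ‖(n : ℂ) + (Real.sqrt 3 : ℂ)‖ := by
    rw [heq]
  have h1 : ‖(n : ℂ) * z‖ ≤ n := by
    rw [norm_mul, Complex.norm_natCast]
    calc (n : ℝ) * ‖z‖ ≤ (n : ℝ) * 1 := by
          exact mul_le_mul_of_nonneg_left hz1 (by positivity)
      _ = n := by ring
  have h2 : ‖(n : ℂ) + (Real.sqrt 3 : ℂ)‖ = n + Real.sqrt 3 := by
    have : ((n : ℂ) + (Real.sqrt 3 : ℂ)) = (((n : ℝ) + Real.sqrt 3 : ℝ) : ℂ) := by push_cast; ring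
    rw [this, Complex.norm_real, Real.norm_eq_abs, _root_.abs_of_nonneg (by positivity)]
  rw [habs, h2] at h1
  have : (0:ℝ) < Real.sqrt 3 := Real.sqrt_pos.mpr (by norm_num)
  linarith

/-- For every n ≥ 1 and z ∈ 𝔻, f^n(z) = ((√3−n)z + n)/(−nz + n + √3). -/
theorem apollonian_iterate_formula (n : ℕ) (hn : 1 ≤ n) (z : ℂ) (hz : z ∈ unitD) :
    apolF^[n] z =
      (((Real.sqrt 3 : ℂ) - (n : ℂ)) * z + (n : ℂ)) /
        (-(n : ℂ) * z + (n : ℂ) + (Real.sqrt 3 : ℂ)) := by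
  induction n with
  | zero => omega
  | succ m ih =>
    rcases Nat.eq_or_lt_of_le hn with h1 | h1
    · -- m + 1 = 1
      have hm : m = 0 := by omega
      subst hm
      simp only [zero_add, Function.iterate_one, apolF, lam]
      push_cast
      ring_nf
    · have hm : 1 ≤ m := by omega
      have hDm := den_ne m hm z hz
      have ha : ((Real.sqrt 3 : ℂ)) ≠ 0 := by
        simp only [ne_eq, Complex.ofReal_eq_zero]
        exact Real.sqrt_ne_zero'.mpr (by norm_num)
      rw [Function.iterate_succ_apply', ih hm]
      set a : ℂ := (Real.sqrt 3 : ℂ) with ha_def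
      have keyN : ((a - 1) * ((((a - (m:ℂ)) * z + (m:ℂ))) / (-(m:ℂ) * z + (m:ℂ) + a)) + 1)
          = a * ((a - ((m:ℂ) + 1)) * z + ((m:ℂ) + 1)) / (-(m:ℂ) * z + (m:ℂ) + a) := by
        rw [mul_div_assoc', div_add' _ _ _ hDm]
        congr 1
        ring
      have key : (-((((a - (m:ℂ)) * z + (m:ℂ))) / (-(m:ℂ) * z + (m:ℂ) + a)) + a + 1)
          = a * (-((m:ℂ) + 1) * z + ((m:ℂ) + 1) + a) / (-(m:ℂ) * z + (m:ℂ) + a) := by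
        rw [← neg_div, div_add' _ _ _ hDm, div_add' _ _ _ hDm]
        congr 1
        ring
      simp only [apolF, lam, ← ha_def]
      push_cast
      rw [keyN, key, div_div_div_cancel_right₀ hDm, mul_div_mul_left _ _ ha]

end
end

section
/- For every (k,n) ∈ I and all z, w in the closed unit disk 𝔻, |φ'_{k,n}(z)| ≤ K₁·|φ'_{k,n}(w)|, where K₁ is the explicit constant K₁ = [ (√((1/2+(1+λ)(λ+1))² + 3/4) + √(((3−λ)/2+λ)² + (3/4)(λ−1)²)) / (√((1/2+(1+λ)(λ+1))² + 3/4) − √(((3−λ)/2+λ)² + (3/4)(λ−1)²)) ]² with λ = √3 (numerically K₁ ≈ 3.53765052763825). -/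
open Complex Metric Set
open scoped ENNReal

noncomputable section

/-- The explicit distortion constant K₁ ≈ 3.53765052763825. -/
def K1 : ℝ :=
  ((Real.sqrt ((1 / 2 + (1 + lam) * (lam + 1)) ^ 2 + 3 / 4) +
      Real.sqrt (((3 - lam) / 2 + lam) ^ 2 + 3 / 4 * (lam - 1) ^ 2)) /
    (Real.sqrt ((1 / 2 + (1 + lam) * (lam + 1)) ^ 2 + 3 / 4) -
      Real.sqrt (((3 - lam) / 2 + lam) ^ 2 + 3 / 4 * (lam - 1) ^ 2))) ^ 2

/-! ### Auxiliary definitions -/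

/-- ω_k = e^{iθ_k}. -/
def omg (k : ℕ) : ℂ := Complex.exp ((thetaA k : ℂ) * Complex.I)

/-- The denominator of the n-th iterate of f. -/
def dd (m : ℕ) (z : ℂ) : ℂ := -(m : ℂ) * z + (lam : ℂ) + m

/-- Closed form for the n-th iterate of f. -/
def gfun (n : ℕ) (z : ℂ) : ℂ := (((lam : ℂ) - n) * z + n) / dd n z

/-- c_{k,n}. -/
def cc (k n : ℕ) : ℂ := ((lam : ℂ) + n) * ((lam : ℂ) + 1) - (n : ℂ) * omg k

/-- b_{k,n}. -/
def bb (k n : ℕ) : ℂ := ((lam : ℂ) + n) + (n : ℂ) * omg k * ((lam : ℂ) - 1)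

/-! ### Basic facts about λ -/

lemma lam_pos : 0 < lam := Real.sqrt_pos.mpr (by norm_num)

lemma lam_sq : lam ^ 2 = 3 := Real.sq_sqrt (by norm_num)

lemma clam_sq : (lam : ℂ) ^ 2 = 3 := by
  rw [← Complex.ofReal_pow, lam_sq]; norm_num

lemma clam_ne : (lam : ℂ) ≠ 0 := by
  simpa using Complex.ofReal_ne_zero.mpr (ne_of_gt lam_pos)

lemma lam_le_two : lam ≤ 2 := by nlinarith [lam_sq, lam_pos]

lemma lam_ge : 3 / 2 ≤ lam := by nlinarith [lam_sq, lam_pos]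

/-- Helper: a real number minus a complex number of smaller modulus is nonzero. -/
lemma sub_ne_of_abs_lt {a : ℝ} {y : ℂ} (h : ‖y‖ < a) : (a : ℂ) - y ≠ 0 := by
  intro h0
  rw [sub_eq_zero] at h0
  rw [← h0, Complex.norm_real, Real.norm_eq_abs] at h
  exact absurd h (not_lt.2 (le_abs_self a))

lemma dd_ne {n m : ℕ} (hm : m ≤ n) (hn : 1 ≤ n) {z : ℂ}
    (hz : ‖z‖ < 1 + lam / n) : dd m z ≠ 0 := by
  have hrw : dd m z = ((lam + m : ℝ) : ℂ) - (m : ℂ) * z := by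
    rw [dd]; push_cast; ring
  rw [hrw]
  apply sub_ne_of_abs_lt
  rw [norm_mul, Complex.norm_natCast]
  rcases Nat.eq_zero_or_pos m with h0 | hpos
  · subst h0; simpa using lt_of_lt_of_le lam_pos (le_refl _)
  · have hmpos : (0 : ℝ) < m := by exact_mod_cast hpos
    have hnpos : (0 : ℝ) < n := by exact_mod_cast hn
    have hmn : (m : ℝ) ≤ n := by exact_mod_cast hm
    have h1 : (m : ℝ) * ‖z‖ < m * (1 + lam / n) :=
      (mul_lt_mul_iff_right₀ hmpos).mpr hz
    have h2 : (m : ℝ) * (1 + lam / n) ≤ m + lam := by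
      have : (m : ℝ) * (lam / n) ≤ lam := by
        rw [mul_div_assoc']
        rw [div_le_iff₀ hnpos]
        nlinarith [lam_pos]
      nlinarith
    linarith

lemma abs_le_ball {n : ℕ} (hn : 1 ≤ n) {z : ℂ} (hz : ‖z‖ ≤ 1) :
    ‖z‖ < 1 + lam / n := by
  have hnpos : (0 : ℝ) < n := by exact_mod_cast hn
  have : 0 < lam / n := div_pos lam_pos hnpos
  linarith

/-! ### The iterate of f in closed form -/

lemma apolF_gfun {m : ℕ} {z : ℂ} (h1 : dd m z ≠ 0) (h2 : dd (m + 1) z ≠ 0) :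
    apolF (gfun m z) = gfun (m + 1) z := by
  have hnum : ((lam : ℂ) - 1) * gfun m z + 1 =
      (lam : ℂ) * (((lam : ℂ) - (m + 1 : ℕ)) * z + (m + 1 : ℕ)) / dd m z := by
    rw [gfun]
    field_simp
    push_cast
    rw [dd]
    ring
  have hden : -(gfun m z) + (lam : ℂ) + 1 = (lam : ℂ) * dd (m + 1) z / dd m z := by
    rw [gfun]
    field_simp
    rw [dd, dd]
    push_cast
    ring
  show (((lam : ℂ) - 1) * gfun m z + 1) / (-(gfun m z) + (lam : ℂ) + 1) = _
  rw [hnum, hden, gfun]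
  rw [div_div_div_comm, div_self h1, div_one, mul_div_mul_left _ _ clam_ne]

lemma iterate_eq {n : ℕ} (hn : 1 ≤ n) : ∀ m ≤ n, ∀ z : ℂ,
    ‖z‖ < 1 + lam / n → apolF^[m] z = gfun m z := by
  intro m
  induction m with
  | zero =>
    intro _ z _
    simp only [Function.iterate_zero, id_eq, gfun, dd, Nat.cast_zero, neg_zero, zero_mul,
      sub_zero, add_zero, zero_add]
    exact (mul_div_cancel_left₀ z clam_ne).symm
  | succ m ih =>
    intro hm z hz
    have hm' : m ≤ n := Nat.le_of_succ_le hm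
    rw [Function.iterate_succ_apply', ih hm' z hz]
    exact apolF_gfun (dd_ne hm' hn hz) (dd_ne hm hn hz)

/-! ### Derivatives -/

lemma hasDerivAt_apolF {z : ℂ} (h : (-z + (lam : ℂ) + 1) ≠ 0) :
    HasDerivAt apolF (3 / (-z + (lam : ℂ) + 1) ^ 2) z := by
  have h1 : HasDerivAt (fun w : ℂ => ((lam : ℂ) - 1) * w + 1) ((lam : ℂ) - 1) z := by
    simpa using ((hasDerivAt_id z).const_mul ((lam : ℂ) - 1)).add_const 1
  have h2 : HasDerivAt (fun w : ℂ => -w + (lam : ℂ) + 1) (-1) z := by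
    simpa using (((hasDerivAt_id z).neg).add_const (lam : ℂ)).add_const 1
  refine (h1.div h2 h).congr_deriv ?_
  rw [div_left_inj' (pow_ne_zero 2 h)]
  linear_combination clam_sq

lemma hasDerivAt_gfun (n : ℕ) {u : ℂ} (h : dd n u ≠ 0) :
    HasDerivAt (gfun n) (3 / dd n u ^ 2) u := by
  have h1 : HasDerivAt (fun w : ℂ => ((lam : ℂ) - n) * w + n) ((lam : ℂ) - n) u := by
    simpa using ((hasDerivAt_id u).const_mul ((lam : ℂ) - n)).add_const (n : ℂ)
  have h2 : HasDerivAt (fun w : ℂ => dd n w) (-(n : ℂ)) u := by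
    simpa [dd] using
      ((((hasDerivAt_id u).const_mul (-(n : ℂ)))).add_const (lam : ℂ)).add_const (n : ℂ)
  refine (h1.div h2 h).congr_deriv ?_
  rw [div_left_inj' (pow_ne_zero 2 h), dd]
  linear_combination clam_sq

lemma hasDerivAt_Rot (θ : ℝ) (z : ℂ) :
    HasDerivAt (Rot θ) (Complex.exp ((θ : ℂ) * Complex.I)) z := by
  exact ((hasDerivAt_id z).const_mul (Complex.exp ((θ : ℂ) * Complex.I))).congr_deriv (mul_one _)

lemma abs_exp_I (θ : ℝ) : ‖Complex.exp ((θ : ℂ) * Complex.I)‖ = 1 := by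
  rw [Complex.norm_exp]
  simp

/-! ### f maps the closed disk into itself -/

lemma abs_apolF_le {z : ℂ} (hz : ‖z‖ ≤ 1) : ‖apolF z‖ ≤ 1 := by
  have hd : (-z + (lam : ℂ) + 1) ≠ 0 := by
    have hrw : -z + (lam : ℂ) + 1 = ((lam + 1 : ℝ) : ℂ) - z := by push_cast; ring
    rw [hrw]
    exact sub_ne_of_abs_lt (by nlinarith [lam_pos])
  have hx2 : z.re ^ 2 + z.im ^ 2 ≤ 1 := by
    have := Complex.sq_norm z
    rw [Complex.normSq_apply] at this
    nlinarith [hz, norm_nonneg z]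
  have hx1 : z.re ≤ 1 := by nlinarith [sq_nonneg z.im, sq_nonneg (z.re - 1)]
  have hxm : -1 ≤ z.re := by nlinarith [sq_nonneg z.im, sq_nonneg (z.re + 1)]
  have hkey : Complex.normSq (((lam : ℂ) - 1) * z + 1) ≤
      Complex.normSq (-z + (lam : ℂ) + 1) := by
    rw [Complex.normSq_apply, Complex.normSq_apply]
    simp only [Complex.add_re, Complex.add_im, Complex.mul_re, Complex.mul_im,
      Complex.sub_re, Complex.sub_im, Complex.neg_re, Complex.neg_im,
      Complex.ofReal_re, Complex.ofReal_im, Complex.one_re, Complex.one_im]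
    have key : ((-z.re + lam + 1) ^ 2 + (-z.im + 0 + 0) ^ 2) -
        (((lam - 1) * z.re - 0 * z.im + 1) ^ 2 + ((lam - 1) * z.im + 0 * z.re + 0) ^ 2) =
        (1 - z.re) * ((lam ^ 2 + 2 * lam) - (2 * lam - lam ^ 2) * z.re) +
        (2 * lam - lam ^ 2) * z.im ^ 2 := by ring
    rw [lam_sq] at key
    have h1 : 0 ≤ (1 - z.re) * ((3 + 2 * lam) - (2 * lam - 3) * z.re) := by
      apply mul_nonneg (by linarith)
      nlinarith [lam_ge, lam_le_two]
    nlinarith [h1, sq_nonneg z.im, lam_ge]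
  have hdpos : 0 < ‖-z + (lam : ℂ) + 1‖ := norm_pos_iff.mpr hd
  rw [apolF]
  show ‖(((lam : ℂ) - 1) * z + 1) / (-z + (lam : ℂ) + 1)‖ ≤ 1
  rw [norm_div, div_le_one hdpos]
  calc ‖((lam : ℂ) - 1) * z + 1‖
      = Real.sqrt (Complex.normSq (((lam : ℂ) - 1) * z + 1)) := Complex.norm_def _
    _ ≤ Real.sqrt (Complex.normSq (-z + (lam : ℂ) + 1)) := Real.sqrt_le_sqrt hkey
    _ = ‖-z + (lam : ℂ) + 1‖ := (Complex.norm_def _).symm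

/-! ### ω facts -/

lemma omg_re (k : ℕ) : (omg k).re = -(1 / 2) := by
  rw [omg, Complex.exp_ofReal_mul_I_re, thetaA]
  rcases Nat.even_or_odd k with h | h
  · rw [h.neg_one_pow, one_mul]
    have h3 : 2 * Real.pi / 3 = Real.pi - Real.pi / 3 := by ring
    rw [h3, Real.cos_pi_sub, Real.cos_pi_div_three]
  · rw [h.neg_one_pow, neg_one_mul, Real.cos_neg]
    have h3 : 2 * Real.pi / 3 = Real.pi - Real.pi / 3 := by ring
    rw [h3, Real.cos_pi_sub, Real.cos_pi_div_three]

lemma omg_im_sq (k : ℕ) : (omg k).im ^ 2 = 3 / 4 := by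
  rw [omg, Complex.exp_ofReal_mul_I_im, thetaA]
  have h3 : 2 * Real.pi / 3 = Real.pi - Real.pi / 3 := by ring
  have hsin : Real.sin (2 * Real.pi / 3) = Real.sqrt 3 / 2 := by
    rw [h3, Real.sin_pi_sub, Real.sin_pi_div_three]
  have hsq : (Real.sqrt 3 / 2) ^ 2 = 3 / 4 := by
    rw [div_pow, Real.sq_sqrt (by norm_num : (0:ℝ) ≤ 3)]; norm_num
  rcases Nat.even_or_odd k with h | h
  · rw [h.neg_one_pow, one_mul, hsin, hsq]
  · rw [h.neg_one_pow, neg_one_mul, Real.sin_neg, hsin, neg_pow, hsq]; norm_num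

/-! ### Moduli of b and c -/

lemma cc_sq (k n : ℕ) : (‖cc k n‖) ^ 2 =
    ((lam + n) * (lam + 1) + n / 2) ^ 2 + 3 / 4 * n ^ 2 := by
  rw [Complex.sq_norm, Complex.normSq_apply, cc]
  simp only [Complex.sub_re, Complex.sub_im, Complex.add_re, Complex.add_im,
    Complex.mul_re, Complex.mul_im, Complex.ofReal_re, Complex.ofReal_im,
    Complex.natCast_re, Complex.natCast_im, Complex.one_re, Complex.one_im]
  rw [omg_re k]
  linear_combination ((n : ℝ)) ^ 2 * omg_im_sq k

lemma bb_sq (k n : ℕ) : (‖bb k n‖) ^ 2 =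
    (lam + n * (3 - lam) / 2) ^ 2 + 3 / 4 * (lam - 1) ^ 2 * n ^ 2 := by
  rw [Complex.sq_norm, Complex.normSq_apply, bb]
  simp only [Complex.sub_re, Complex.sub_im, Complex.add_re, Complex.add_im,
    Complex.mul_re, Complex.mul_im, Complex.ofReal_re, Complex.ofReal_im,
    Complex.natCast_re, Complex.natCast_im, Complex.one_re, Complex.one_im]
  rw [omg_re k]
  linear_combination (lam - 1) ^ 2 * ((n : ℝ)) ^ 2 * omg_im_sq k

/-! ### The modulus of the derivative of φ -/

lemma deriv_phi_abs (k n : ℕ) (hn : 1 ≤ n) {z : ℂ} (hz : ‖z‖ ≤ 1) :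
    ‖deriv (phi k n) z‖ =
      9 / (‖cc k n - bb k n * z‖) ^ 2 := by
  have hdz : (-z + (lam : ℂ) + 1) ≠ 0 := by
    have hrw : -z + (lam : ℂ) + 1 = ((lam + 1 : ℝ) : ℂ) - z := by push_cast; ring
    rw [hrw]; exact sub_ne_of_abs_lt (by nlinarith [lam_pos])
  set u : ℂ := Rot (thetaA k) (apolF z) with hu_def
  have hfz : ‖apolF z‖ ≤ 1 := abs_apolF_le hz
  have hu : ‖u‖ ≤ 1 := by
    rw [hu_def, Rot]
    simp only [norm_mul, abs_exp_I, one_mul]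
    exact hfz
  have hddu : dd n u ≠ 0 := dd_ne le_rfl hn (abs_le_ball hn hu)
  -- derivative of the iterate
  have hg : HasDerivAt (gfun n) (3 / dd n u ^ 2) u := hasDerivAt_gfun n hddu
  have heq : apolF^[n] =ᶠ[nhds u] gfun n := by
    have hop : IsOpen (Metric.ball (0 : ℂ) (1 + lam / n)) := Metric.isOpen_ball
    have hmem : u ∈ Metric.ball (0 : ℂ) (1 + lam / n) := by
      rw [Metric.mem_ball, Complex.dist_eq, sub_zero]
      exact abs_le_ball hn hu
    filter_upwards [hop.mem_nhds hmem] with y hy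
    have hy' : ‖y‖ < 1 + lam / n := by
      rw [Metric.mem_ball, Complex.dist_eq, sub_zero] at hy
      exact hy
    exact iterate_eq hn n le_rfl y hy'
  have hgn : HasDerivAt (apolF^[n]) (3 / dd n u ^ 2) u := hg.congr_of_eventuallyEq heq
  -- chain rule
  have hf : HasDerivAt apolF (3 / (-z + (lam : ℂ) + 1) ^ 2) z := hasDerivAt_apolF hdz
  have hrot1 : HasDerivAt (Rot (thetaA k)) (omg k) (apolF z) := hasDerivAt_Rot _ _
  have h1 : HasDerivAt (Rot (thetaA k) ∘ apolF)
      (omg k * (3 / (-z + (lam : ℂ) + 1) ^ 2)) z := hrot1.comp z hf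
  have h2 : HasDerivAt (apolF^[n] ∘ Rot (thetaA k) ∘ apolF)
      (3 / dd n u ^ 2 * (omg k * (3 / (-z + (lam : ℂ) + 1) ^ 2))) z := hgn.comp z h1
  have hrot2 : HasDerivAt (Rot (thetaB k))
      (Complex.exp ((thetaB k : ℂ) * Complex.I)) ((apolF^[n] ∘ Rot (thetaA k) ∘ apolF) z) :=
    hasDerivAt_Rot _ _
  have hphi : HasDerivAt (phi k n)
      (Complex.exp ((thetaB k : ℂ) * Complex.I) *
        (3 / dd n u ^ 2 * (omg k * (3 / (-z + (lam : ℂ) + 1) ^ 2)))) z := hrot2.comp z h2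
  rw [hphi.deriv]
  -- the product identity
  have hprod : dd n u * (-z + (lam : ℂ) + 1) = cc k n - bb k n * z := by
    have hu_eq : u = omg k * ((((lam : ℂ) - 1) * z + 1) / (-z + (lam : ℂ) + 1)) := rfl
    rw [dd, hu_eq, cc, bb]
    field_simp
    ring
  have habs : ‖cc k n - bb k n * z‖ =
      ‖dd n u‖ * ‖-z + (lam : ℂ) + 1‖ := by
    rw [← hprod, norm_mul]
  have hab1 : ‖dd n u‖ ≠ 0 := by
    simpa using hddu
  have hab2 : ‖-z + (lam : ℂ) + 1‖ ≠ 0 := by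
    simpa using hdz
  rw [norm_mul, norm_mul, norm_mul, abs_exp_I]
  rw [omg, abs_exp_I]
  rw [norm_div, norm_div, norm_pow, norm_pow]
  rw [habs]
  have h3 : ‖(3 : ℂ)‖ = 3 := by
    simpa using Complex.norm_ofNat 3
  rw [h3]
  field_simp
  ring

/-! ### The real constants -/

def C1 : ℝ := Real.sqrt ((1 / 2 + (1 + lam) * (lam + 1)) ^ 2 + 3 / 4)

def B1 : ℝ := Real.sqrt (((3 - lam) / 2 + lam) ^ 2 + 3 / 4 * (lam - 1) ^ 2)

lemma K1_eq : K1 = ((C1 + B1) / (C1 - B1)) ^ 2 := rfl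

lemma C1_sq : C1 ^ 2 = 33 + 18 * lam := by
  rw [C1, Real.sq_sqrt (by positivity)]
  linear_combination (lam ^ 2 + 4 * lam + 10) * lam_sq

lemma B1_sq : B1 ^ 2 = 6 := by
  rw [B1, Real.sq_sqrt (by positivity)]
  linear_combination lam_sq

lemma C1_nonneg : 0 ≤ C1 := Real.sqrt_nonneg _

lemma B1_nonneg : 0 ≤ B1 := Real.sqrt_nonneg _

lemma B1_pos : 0 < B1 := by
  rcases lt_or_eq_of_le B1_nonneg with h | h
  · exact h
  · exfalso; have := B1_sq; rw [← h] at this; norm_num at this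

lemma B1_lt_C1 : B1 < C1 := by
  nlinarith [C1_sq, B1_sq, C1_nonneg, B1_nonneg, lam_pos]

lemma key_ineq {n : ℕ} (hn : 1 ≤ n) (k : ℕ) :
    C1 ^ 2 * ‖bb k n‖ ^ 2 ≤ B1 ^ 2 * ‖cc k n‖ ^ 2 := by
  have hn1 : (1 : ℝ) ≤ (n : ℝ) := by exact_mod_cast hn
  rw [C1_sq, B1_sq, cc_sq, bb_sq]
  have hdiff : 6 * (((lam + n) * (lam + 1) + n / 2) ^ 2 + 3 / 4 * (n : ℝ) ^ 2) -
      (33 + 18 * lam) * ((lam + n * (3 - lam) / 2) ^ 2 + 3 / 4 * (lam - 1) ^ 2 * (n : ℝ) ^ 2) =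
      3 * ((n : ℝ) - 1) * (3 * lam * n + 9 + 6 * lam) := by
    linear_combination (6 * lam ^ 2 - 18 * lam * (n : ℝ) ^ 2 + 30 * lam * (n : ℝ) -
      6 * lam + 27 * (n : ℝ) ^ 2 + 9 * (n : ℝ) - 9) * lam_sq
  have hpos : 0 ≤ 3 * ((n : ℝ) - 1) * (3 * lam * n + 9 + 6 * lam) := by
    apply mul_nonneg (by linarith)
    have := lam_pos
    nlinarith
  linarith

/-- For every (k,n) ∈ I and z, w ∈ 𝔻, |φ'_{k,n}(z)| ≤ K₁ · |φ'_{k,n}(w)|. -/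
theorem apollonian_generator_distortion (k n : ℕ) (hk1 : 1 ≤ k) (hk6 : k ≤ 6)
    (hn : 1 ≤ n) (z w : ℂ) (hz : z ∈ unitD) (hw : w ∈ unitD) :
    ‖deriv (phi k n) z‖ ≤ K1 * ‖deriv (phi k n) w‖ := by
  have hz1 : ‖z‖ ≤ 1 := by
    rw [unitD, Metric.mem_closedBall, Complex.dist_eq, sub_zero] at hz; exact hz
  have hw1 : ‖w‖ ≤ 1 := by
    rw [unitD, Metric.mem_closedBall, Complex.dist_eq, sub_zero] at hw; exact hw
  rw [deriv_phi_abs k n hn hz1, deriv_phi_abs k n hn hw1]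
  set c : ℝ := ‖cc k n‖ with hc_def
  set b : ℝ := ‖bb k n‖ with hb_def
  have hn1 : (1 : ℝ) ≤ (n : ℝ) := by exact_mod_cast hn
  have hb0 : 0 ≤ b := norm_nonneg _
  have hc0 : 0 ≤ c := norm_nonneg _
  -- the key inequality C1^2 b^2 ≤ B1^2 c^2
  have hkey : C1 ^ 2 * b ^ 2 ≤ B1 ^ 2 * c ^ 2 := key_ineq hn k
  have hcpos : 0 < c := by
    rcases lt_or_eq_of_le hc0 with h | h
    · exact h
    · exfalso
      have h2 : c ^ 2 = ((lam + n) * (lam + 1) + n / 2) ^ 2 + 3 / 4 * (n : ℝ) ^ 2 := cc_sq k n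
      rw [← h] at h2
      nlinarith [sq_nonneg ((lam + (n:ℝ)) * (lam + 1) + (n:ℝ) / 2), hn1]
  -- C1 * b ≤ B1 * c
  have hbc : C1 * b ≤ B1 * c := by
    have hsq : (C1 * b) ^ 2 ≤ (B1 * c) ^ 2 := by rw [mul_pow, mul_pow]; exact hkey
    have := Real.sqrt_le_sqrt hsq
    rwa [Real.sqrt_sq (mul_nonneg C1_nonneg hb0), Real.sqrt_sq (mul_nonneg B1_nonneg hc0)] at this
  have hblt : b < c := by
    have h1 : B1 * c < C1 * c := by
      exact (mul_lt_mul_of_pos_right B1_lt_C1 hcpos)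
    have h2 : C1 * b < C1 * c := lt_of_le_of_lt hbc h1
    have hC1pos : 0 < C1 := lt_of_le_of_lt B1_nonneg B1_lt_C1
    exact lt_of_mul_lt_mul_left h2 (le_of_lt hC1pos)
  -- bounds on the two moduli
  set A : ℝ := ‖cc k n - bb k n * z‖ with hA_def
  set B : ℝ := ‖cc k n - bb k n * w‖ with hB_def
  have hA_low : c - b ≤ A := by
    have h1 : ‖cc k n‖ - ‖bb k n * z‖ ≤ ‖cc k n - bb k n * z‖ := norm_sub_norm_le _ _
    rw [norm_mul] at h1
    have h2 : b * ‖z‖ ≤ b := by nlinarith [hz1, hb0, norm_nonneg z]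
    rw [hA_def, hc_def, hb_def]
    linarith
  have hB_low : c - b ≤ B := by
    have h1 : ‖cc k n‖ - ‖bb k n * w‖ ≤ ‖cc k n - bb k n * w‖ := norm_sub_norm_le _ _
    rw [norm_mul] at h1
    have h2 : b * ‖w‖ ≤ b := by nlinarith [hw1, hb0, norm_nonneg w]
    rw [hB_def, hc_def, hb_def]
    linarith
  have hB_up : B ≤ c + b := by
    have h1 : ‖cc k n - bb k n * w‖ ≤ ‖cc k n‖ + ‖bb k n * w‖ := norm_sub_le _ _
    rw [norm_mul] at h1
    have h2 : b * ‖w‖ ≤ b := by nlinarith [hw1, hb0, norm_nonneg w]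
    rw [hB_def, hc_def, hb_def]
    linarith
  have hApos : 0 < A := lt_of_lt_of_le (by linarith) hA_low
  have hBpos : 0 < B := lt_of_lt_of_le (by linarith) hB_low
  -- the distortion bound B^2 ≤ K1 * A^2
  have hCmB : 0 < C1 - B1 := sub_pos.mpr B1_lt_C1
  have hratio_nonneg : 0 ≤ (C1 + B1) / (C1 - B1) :=
    div_nonneg (add_nonneg C1_nonneg B1_nonneg) hCmB.le
  have hstep1 : (c + b) * (C1 - B1) ≤ (C1 + B1) * (c - b) := by
    have hx : (C1 + B1) * (c - b) - (c + b) * (C1 - B1) = 2 * (B1 * c - C1 * b) := by ring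
    linarith
  have hstep2 : c + b ≤ (C1 + B1) / (C1 - B1) * (c - b) := by
    rw [div_mul_eq_mul_div, le_div_iff₀ hCmB]
    linarith
  have hstep3 : B ≤ (C1 + B1) / (C1 - B1) * A := by
    calc B ≤ c + b := hB_up
      _ ≤ (C1 + B1) / (C1 - B1) * (c - b) := hstep2
      _ ≤ (C1 + B1) / (C1 - B1) * A := mul_le_mul_of_nonneg_left hA_low hratio_nonneg
  have hgoal : B ^ 2 ≤ K1 * A ^ 2 := by
    have h1 : B ^ 2 ≤ ((C1 + B1) / (C1 - B1) * A) ^ 2 :=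
      pow_le_pow_left₀ (le_of_lt hBpos) hstep3 2
    rw [K1_eq]
    calc B ^ 2 ≤ ((C1 + B1) / (C1 - B1) * A) ^ 2 := h1
      _ = ((C1 + B1) / (C1 - B1)) ^ 2 * A ^ 2 := by ring
  -- conclude
  have hK1pos : 0 < K1 := by
    rw [K1_eq]
    exact pow_pos (div_pos (by linarith [B1_pos, B1_lt_C1]) hCmB) 2
  have hfin : K1 * (9 / B ^ 2) = K1 * 9 / B ^ 2 := by ring
  rw [hfin, div_le_div_iff₀ (pow_pos hApos 2) (pow_pos hBpos 2)]
  nlinarith [hgoal]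

end
end
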